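/- Let S, S̄ be finite nonempty sets, A a finite nonempty set of actions, and α : S → S̄ a surjective map. Let r : S → A → ℝ, r̄ : S̄ → A → ℝ, and let p : S → A → S → ℝ, p̄ : S̄ → A → S̄ → ℝ be such that p(s,a,·) and p̄(ṡ,a,·) are probability vectors. Suppose for some ε > 0, for all s ∈ S and a ∈ A: |r̄(α(s),a) − r(s,a)| < ε and Σ_{ṡ'} |p̄(α(s),a,ṡ') − Σ_{s' : α(s')=ṡ'} p(s,a,s')| < ε. Suppose ρ ∈ ℝ and λ : S → ℝ satisfy the average-reward optimality equation for (r,p): for all s, ρ + λ(s) = max_{a} [r(s,a) + Σ_{s'} p(s,a,s')·λ(s')], with span(λ) ≤ D, and π : S → A attains this maximum pointwise. Suppose ρ̄ ∈ ℝ and λ̄ : S̄ → ℝ satisfy for all ṡ ∈ S̄ and all a ∈ A: ρ̄ + λ̄(ṡ) ≥ r̄(ṡ,a) + Σ_{ṡ'} p̄(ṡ,a,ṡ')·λ̄(ṡ'). Finally, suppose p' : S → S → ℝ is a row-stochastic matrix such that for all s ∈ S and ṡ' ∈ S̄: Σ_{s' : α(s')=ṡ'} p'(s,s') = p̄(α(s),π(s),ṡ')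 and Σ_{s'} |p(s,π(s),s') − p'(s,s')| < ε, and let μ' be a stationary distribution of p'. Then ρ̄ ≥ ρ − ε·(D+1). -/

import Mathlib

open Finset

/-- Lower-bound direction of Theorem 1 in Bellman-equation form: if the MDP `(r̄, p̄)` on
the aggregated state space `S̄` is an `ε`-approximation of the MDP `(r, p)` on `S` via the
surjection `α`, `(ρ, λ, π)` solve the optimality equation of `(r, p)` with `span λ ≤ D`,
`(ρ̄, λ̄)` is superharmonic for `(r̄, p̄)`, and `p'` is an auxiliary row-stochastic matrix
on `S` whose aggregation under `α` equals `p̄(·, π(·), ·)` and which is `ε`-close in ℓ1 to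
`p(·, π(·), ·)`, with stationary distribution `μ'`, then `ρ̄ ≥ ρ - ε (D + 1)`. -/
theorem bellman_epsilon_approximation_aggregated
    {S Sb A : Type*} [Fintype S] [Nonempty S] [Fintype Sb] [Nonempty Sb] [DecidableEq Sb]
    [Fintype A] [Nonempty A]
    (α : S → Sb) (hα : Function.Surjective α)
    (r : S → A → ℝ) (rbar : Sb → A → ℝ)
    (p : S → A → S → ℝ) (pbar : Sb → A → Sb → ℝ)
    (hp0 : ∀ s a s', 0 ≤ p s a s') (hp1 : ∀ s a, ∑ s', p s a s' = 1)
    (hpbar0 : ∀ sb a sb', 0 ≤ pbar sb a sb') (hpbar1 : ∀ sb a, ∑ sb', pbar sb a sb' = 1)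
    (ε : ℝ) (hε : 0 < ε)
    (hr : ∀ s a, |rbar (α s) a - r s a| < ε)
    (hpdiff : ∀ s a, ∑ sb', |pbar (α s) a sb' -
      ∑ s' ∈ univ.filter (fun s' => α s' = sb'), p s a s'| < ε)
    (ρ D : ℝ) (lam : S → ℝ)
    (hOpt : ∀ s, ρ + lam s =
      univ.sup' univ_nonempty (fun a => r s a + ∑ s', p s a s' * lam s'))
    (hspan : univ.sup' univ_nonempty lam - univ.inf' univ_nonempty lam ≤ D)
    (π : S → A)
    (hπ : ∀ s, r s (π s) + ∑ s', p s (π s) s' * lam s' =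
      univ.sup' univ_nonempty (fun a => r s a + ∑ s', p s a s' * lam s'))
    (ρbar : ℝ) (lambar : Sb → ℝ)
    (hOptbar : ∀ sb a, ρbar + lambar sb ≥ rbar sb a + ∑ sb', pbar sb a sb' * lambar sb')
    (p' : S → S → ℝ)
    (hp'0 : ∀ s s', 0 ≤ p' s s') (hp'1 : ∀ s, ∑ s', p' s s' = 1)
    (hp'agg : ∀ s sb', ∑ s' ∈ univ.filter (fun s' => α s' = sb'), p' s s' =
      pbar (α s) (π s) sb')
    (hp'close : ∀ s, ∑ s', |p s (π s) s' - p' s s'| < ε)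
    (μ' : S → ℝ)
    (hμ0 : ∀ s, 0 ≤ μ' s) (hμ1 : ∑ s, μ' s = 1)
    (hμstat : ∀ s', ∑ s, μ' s * p' s s' = μ' s') :
    ρbar ≥ ρ - ε * (D + 1) := by

  classical
  set m := univ.inf' univ_nonempty lam with hm
  have hD0 : 0 ≤ D := by
    obtain ⟨s0⟩ := (inferInstance : Nonempty S)
    have h1 : univ.inf' univ_nonempty lam ≤ lam s0 := Finset.inf'_le lam (Finset.mem_univ s0)
    have h2 : lam s0 ≤ univ.sup' univ_nonempty lam := Finset.le_sup' lam (Finset.mem_univ s0)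
    linarith
  have hlam_ub : ∀ s : S, lam s - m ≤ D := fun s =>
    le_trans (sub_le_sub_right (Finset.le_sup' lam (Finset.mem_univ s)) m) hspan
  have hlam_lb : ∀ s : S, 0 ≤ lam s - m := fun s =>
    sub_nonneg.2 (Finset.inf'_le lam (Finset.mem_univ s))
  -- fiberwise identity
  have hfib : ∀ s : S, ∑ sb', pbar (α s) (π s) sb' * lambar sb'
      = ∑ s', p' s s' * lambar (α s') := by
    intro s
    rw [← Finset.sum_fiberwise univ α (fun s' => p' s s' * lambar (α s'))]
    refine Finset.sum_congr rfl fun sb' _ => ?_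
    rw [← hp'agg s sb', Finset.sum_mul]
    refine Finset.sum_congr rfl fun s' hs' => ?_
    rw [Finset.mem_filter] at hs'
    rw [hs'.2]
  -- stationarity
  have hstat : ∀ f : S → ℝ, ∑ s, μ' s * ∑ s', p' s s' * f s' = ∑ s', μ' s' * f s' := by
    intro f
    calc ∑ s, μ' s * ∑ s', p' s s' * f s'
        = ∑ s, ∑ s', μ' s * p' s s' * f s' := by
          simp [Finset.mul_sum, mul_assoc]
      _ = ∑ s', ∑ s, μ' s * p' s s' * f s' := Finset.sum_comm
      _ = ∑ s', (∑ s, μ' s * p' s s') * f s' := by simp [Finset.sum_mul]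
      _ = ∑ s', μ' s' * f s' := by simp [hμstat]
  -- step 1 : ρbar ≥ ∑ μ' rbar
  have h1 : ρbar ≥ ∑ s, μ' s * rbar (α s) (π s) := by
    have hsum : ∑ s, μ' s * (ρbar + lambar (α s))
        ≥ ∑ s, μ' s * (rbar (α s) (π s) + ∑ s', p' s s' * lambar (α s')) := by
      refine Finset.sum_le_sum fun s _ => ?_
      exact mul_le_mul_of_nonneg_left (by rw [← hfib]; exact hOptbar (α s) (π s)) (hμ0 s)
    have e1 : ∑ s, μ' s * (ρbar + lambar (α s))
        = ρbar + ∑ s, μ' s * lambar (α s) := by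
      simp [mul_add, Finset.sum_add_distrib, ← Finset.sum_mul, hμ1]
    have e2 : ∑ s, μ' s * (rbar (α s) (π s) + ∑ s', p' s s' * lambar (α s'))
        = (∑ s, μ' s * rbar (α s) (π s)) + ∑ s, μ' s * lambar (α s) := by
      rw [show (fun s => μ' s * (rbar (α s) (π s) + ∑ s', p' s s' * lambar (α s'))) =
        (fun s => μ' s * rbar (α s) (π s) + μ' s * ∑ s', p' s s' * lambar (α s')) from
        funext fun s => mul_add _ _ _]
      rw [Finset.sum_add_distrib, hstat (fun s' => lambar (α s'))]
    rw [e1, e2] at hsum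
    linarith
  -- step 2 : ∑ μ' rbar ≥ ∑ μ' r - ε
  have h2 : ∑ s, μ' s * rbar (α s) (π s) ≥ (∑ s, μ' s * r s (π s)) - ε := by
    have : ∑ s, μ' s * rbar (α s) (π s) ≥ ∑ s, μ' s * (r s (π s) - ε) := by
      refine Finset.sum_le_sum fun s _ => ?_
      refine mul_le_mul_of_nonneg_left ?_ (hμ0 s)
      have := abs_lt.1 (hr s (π s))
      linarith [this.1]
    have e : ∑ s, μ' s * (r s (π s) - ε) = (∑ s, μ' s * r s (π s)) - ε := by
      simp [mul_sub, Finset.sum_sub_distrib, ← Finset.sum_mul, hμ1]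
    linarith [e ▸ this]
  -- step 3 : per-state drift bound
  have h3 : ∀ s : S, ∑ s', p s (π s) s' * lam s' ≤ (∑ s', p' s s' * lam s') + ε * D := by
    intro s
    have hzero : ∑ s', (p s (π s) s' - p' s s') = 0 := by
      rw [Finset.sum_sub_distrib, hp1, hp'1, sub_self]
    have key : ∑ s', (p s (π s) s' - p' s s') * lam s' ≤ ε * D := by
      have e : ∑ s', (p s (π s) s' - p' s s') * lam s'
          = ∑ s', (p s (π s) s' - p' s s') * (lam s' - m) := by
        rw [show (fun s' => (p s (π s) s' - p' s s') * (lam s' - m)) =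
          (fun s' => (p s (π s) s' - p' s s') * lam s' - (p s (π s) s' - p' s s') * m) from
          funext fun s' => mul_sub _ _ _]
        rw [Finset.sum_sub_distrib, ← Finset.sum_mul, hzero, zero_mul, sub_zero]
      rw [e]
      calc ∑ s', (p s (π s) s' - p' s s') * (lam s' - m)
          ≤ ∑ s', |p s (π s) s' - p' s s'| * D := by
            refine Finset.sum_le_sum fun s' _ => ?_
            calc (p s (π s) s' - p' s s') * (lam s' - m)
                ≤ |p s (π s) s' - p' s s'| * (lam s' - m) :=
                  mul_le_mul_of_nonneg_right (le_abs_self _) (hlam_lb s')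
              _ ≤ |p s (π s) s' - p' s s'| * D :=
                  mul_le_mul_of_nonneg_left (hlam_ub s') (abs_nonneg _)
        _ = (∑ s', |p s (π s) s' - p' s s'|) * D := (Finset.sum_mul _ _ _).symm
        _ ≤ ε * D := mul_le_mul_of_nonneg_right (le_of_lt (hp'close s)) hD0
    have : ∑ s', (p s (π s) s' - p' s s') * lam s'
        = (∑ s', p s (π s) s' * lam s') - ∑ s', p' s s' * lam s' := by
      rw [show (fun s' => (p s (π s) s' - p' s s') * lam s') =
        (fun s' => p s (π s) s' * lam s' - p' s s' * lam s') from
        funext fun s' => sub_mul _ _ _]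
      rw [Finset.sum_sub_distrib]
    linarith [this ▸ key]
  -- step 4 : ∑ μ' r ≥ ρ - ε * D
  have h4 : ∑ s, μ' s * r s (π s) ≥ ρ - ε * D := by
    have hrs : ∀ s : S, r s (π s) = ρ + lam s - ∑ s', p s (π s) s' * lam s' := by
      intro s
      have := (hπ s).trans (hOpt s).symm
      linarith
    have hge : ∀ s : S, r s (π s) ≥ ρ + lam s - (∑ s', p' s s' * lam s') - ε * D := by
      intro s
      rw [hrs s]
      linarith [h3 s]
    have hsum : ∑ s, μ' s * r s (π s)
        ≥ ∑ s, μ' s * (ρ + lam s - (∑ s', p' s s' * lam s') - ε * D) :=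
      Finset.sum_le_sum fun s _ => mul_le_mul_of_nonneg_left (hge s) (hμ0 s)
    have e : ∑ s, μ' s * (ρ + lam s - (∑ s', p' s s' * lam s') - ε * D)
        = ρ + (∑ s, μ' s * lam s) - (∑ s, μ' s * lam s) - ε * D := by
      rw [show (fun s => μ' s * (ρ + lam s - (∑ s', p' s s' * lam s') - ε * D)) =
        (fun s => μ' s * ρ + μ' s * lam s - μ' s * (∑ s', p' s s' * lam s')
          - μ' s * (ε * D)) from funext fun s => by ring]
      rw [Finset.sum_sub_distrib, Finset.sum_sub_distrib, Finset.sum_add_distrib,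
        hstat lam, ← Finset.sum_mul, ← Finset.sum_mul, hμ1]
      ring
    rw [e] at hsum
    linarith
  linarith
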